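/- Let ℓ, ℓ' ≥ 1 be integers, let r ≥ 4 be an integer divisible by 4, and let 0 < η ≤ 1. Let p : 𝔽₂^ℓ × 𝔽₂^ℓ → ℝ≥0 satisfy p(s,t) ≤ η for all s, t and Σ_{s,t} p(s,t) ≤ 1. Let F and G be drawn independently and uniformly at random from (possibly different) r-wise independent families of functions from 𝔽₂^ℓ to 𝔽₂^{ℓ'}, and let u₀, u₁ ∈ 𝔽₂^{ℓ'} be nonzero. Define the random variable R = Σ_{s,t ∈ 𝔽₂^ℓ} (-1)^{⟨u₀,F(s)⟩ + ⟨u₁,G(t)⟩} · p(s,t). Then for every λ > 0, P(|R| ≥ λ) ≤ 8·e^{1/(3r)}·√(πr)·(8·η·r²/(e²·λ²))^{r/4}. -/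

import Mathlib

open Finset

set_option maxHeartbeats 1600000


def chi (x : ZMod 2) : ℝ := (-1 : ℝ) ^ x.val

lemma zmod2_cases (x : ZMod 2) : x = 0 ∨ x = 1 := by revert x; decide

lemma chi_zero : chi 0 = 1 := rfl
lemma chi_one : chi 1 = -1 := by
  have : (1 : ZMod 2).val = 1 := rfl
  rw [chi, this]; norm_num

lemma chi_cases (x : ZMod 2) : chi x = 1 ∨ chi x = -1 := by
  rcases zmod2_cases x with h | h <;> rw [h]
  · exact Or.inl chi_zero
  · exact Or.inr chi_one

lemma chi_add (x y : ZMod 2) : chi (x + y) = chi x * chi y := by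
  have h11 : (1 : ZMod 2) + 1 = 0 := by decide
  rcases zmod2_cases x with h | h <;> rcases zmod2_cases y with h' | h' <;>
    rw [h, h'] <;>
    simp [h11, chi_zero, chi_one]

lemma chi_sq (x : ZMod 2) : chi x ^ 2 = 1 := by
  rcases chi_cases x with h | h <;> rw [h] <;> norm_num

lemma chi_pow_even {n : ℕ} (hn : Even n) (x : ZMod 2) : chi x ^ n = 1 := by
  obtain ⟨k, rfl⟩ := hn
  rw [← two_mul, pow_mul, chi_sq, one_pow]

lemma chi_pow_odd {n : ℕ} (hn : ¬ Even n) (x : ZMod 2) : chi x ^ n = chi x := by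
  obtain ⟨k, rfl⟩ := Nat.odd_iff.mpr (Nat.not_even_iff.mp hn)
  rw [pow_add, pow_mul, chi_sq, one_pow, pow_one, one_mul]

lemma chi_sum {ι : Type*} (s : Finset ι) (f : ι → ZMod 2) :
    chi (∑ j ∈ s, f j) = ∏ j ∈ s, chi (f j) := by
  classical
  induction s using Finset.cons_induction with
  | empty => simp [chi_zero]
  | cons a s ha ih => rw [Finset.sum_cons, Finset.prod_cons, chi_add, ih]

lemma zmod2_univ : (univ : Finset (ZMod 2)) = {0, 1} := by decide

lemma char_sum {n : ℕ} (u : Fin n → ZMod 2) (hu : u ≠ 0) :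
    ∑ y : Fin n → ZMod 2, chi (∑ j, u j * y j) = 0 := by
  classical
  obtain ⟨j₀, hj₀⟩ : ∃ j, u j ≠ 0 := by
    by_contra h
    push_neg at h
    exact hu (funext h)
  have hj1 : u j₀ = 1 := (zmod2_cases (u j₀)).resolve_left hj₀
  calc ∑ y : Fin n → ZMod 2, chi (∑ j, u j * y j)
      = ∑ y : Fin n → ZMod 2, ∏ j, chi (u j * y j) := by
        refine Finset.sum_congr rfl fun y _ => ?_
        exact chi_sum univ _
    _ = ∏ j, ∑ c : ZMod 2, chi (u j * c) := by
        rw [← Fintype.piFinset_univ]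
        exact (Finset.prod_univ_sum _ fun j c => chi (u j * c)).symm
    _ = 0 := by
        apply Finset.prod_eq_zero (Finset.mem_univ j₀)
        rw [hj1]
        rw [zmod2_univ, Finset.sum_pair (by decide : (0 : ZMod 2) ≠ 1)]
        simp [chi_zero, chi_one]

section PairSet

variable {m : ℕ}

def pairSet (σ : Equiv.Perm (Fin m)) : Finset (Fin m) :=
  univ.filter fun i => i < σ i

lemma pairSet_mem_alt {σ : Equiv.Perm (Fin m)} (hinv : ∀ i, σ (σ i) = i)
    (hfp : ∀ i, σ i ≠ i) (i : Fin m) (h : i ∉ pairSet σ) : σ i ∈ pairSet σ := by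
  simp only [pairSet, mem_filter, mem_univ, true_and] at h ⊢
  rw [hinv i]
  rcases lt_trichotomy i (σ i) with hl | he | hg
  · exact absurd hl h
  · exact absurd he.symm (hfp i)
  · exact hg

lemma pairSet_not_mem {σ : Equiv.Perm (Fin m)} (hinv : ∀ i, σ (σ i) = i)
    (i : Fin m) (h : i ∈ pairSet σ) : σ i ∉ pairSet σ := by
  simp only [pairSet, mem_filter, mem_univ, true_and] at h ⊢
  rw [hinv i]
  exact not_lt.mpr h.le

lemma pairSet_union {σ : Equiv.Perm (Fin m)} (hinv : ∀ i, σ (σ i) = i)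
    (hfp : ∀ i, σ i ≠ i) :
    (pairSet σ) ∪ (pairSet σ).image σ = univ ∧
      Disjoint (pairSet σ) ((pairSet σ).image σ) := by
  constructor
  · apply Finset.eq_univ_of_forall
    intro i
    by_cases h : i ∈ pairSet σ
    · exact Finset.mem_union_left _ h
    · refine Finset.mem_union_right _ ?_
      refine Finset.mem_image.mpr ⟨σ i, pairSet_mem_alt hinv hfp i h, hinv i⟩
  · rw [Finset.disjoint_left]
    intro i hi hmem
    obtain ⟨j, hj, hji⟩ := Finset.mem_image.mp hmem
    have : σ i = j := by rw [← hji, hinv]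
    have hσi : σ i ∉ pairSet σ := pairSet_not_mem hinv i hi
    rw [this] at hσi
    exact hσi hj

lemma pairprod {M : Type*} [CommMonoid M] {σ : Equiv.Perm (Fin m)}
    (hinv : ∀ i, σ (σ i) = i) (hfp : ∀ i, σ i ≠ i) (F : Fin m → M) :
    ∏ i, F i = ∏ i ∈ pairSet σ, (F i * F (σ i)) := by
  obtain ⟨hun, hdis⟩ := pairSet_union hinv hfp
  rw [← hun, Finset.prod_union hdis,
    Finset.prod_image (fun a _ b _ h => σ.injective h), Finset.prod_mul_distrib]

lemma card_pairSet {σ : Equiv.Perm (Fin m)} (hinv : ∀ i, σ (σ i) = i)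
    (hfp : ∀ i, σ i ≠ i) : 2 * (pairSet σ).card = m := by
  obtain ⟨hun, hdis⟩ := pairSet_union hinv hfp
  have := Finset.card_union_of_disjoint hdis
  rw [hun] at this
  rw [Finset.card_image_of_injective _ σ.injective] at this
  simp only [Finset.card_univ, Fintype.card_fin] at this
  omega

lemma fact_sum {A : Type*} [Fintype A] [DecidableEq A] {σ : Equiv.Perm (Fin m)}
    (hinv : ∀ i, σ (σ i) = i) (hfp : ∀ i, σ i ≠ i) (h : A → Fin m → ℝ) :
    ∑ s : Fin m → A, (if ∀ i, s (σ i) = s i then ∏ i, h (s i) i else 0)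
      = ∏ i ∈ pairSet σ, (∑ a : A, h a i * h a (σ i)) := by
  classical
  rw [← Finset.sum_filter]
  rw [← Finset.prod_attach (pairSet σ) (fun i => ∑ a : A, h a i * h a (σ i))]
  have : ∏ i ∈ (pairSet σ).attach, (∑ a : A, h a i.1 * h a (σ i.1))
      = ∑ g ∈ Fintype.piFinset (fun _ : (pairSet σ) => (univ : Finset A)),
          ∏ i : (pairSet σ), (h (g i) i.1 * h (g i) (σ i.1)) := by
    rw [← Finset.univ_eq_attach]
    exact Finset.prod_univ_sum (fun _ => (univ : Finset A))
      (fun (i : (pairSet σ)) (a : A) => h a i.1 * h a (σ i.1))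
  rw [this, Fintype.piFinset_univ]
  refine Finset.sum_nbij' (fun s => fun i : (pairSet σ) => s i.1)
    (fun g => fun i : Fin m => if hm : i ∈ pairSet σ then g ⟨i, hm⟩
      else g ⟨σ i, pairSet_mem_alt hinv hfp i hm⟩)
    (fun s hs => Finset.mem_univ _) (fun g hg => ?_) (fun s hs => ?_)
    (fun g hg => ?_) (fun s hs => ?_)
  · -- membership in filter
    simp only [Finset.mem_filter, Finset.mem_univ, true_and]
    intro i
    by_cases hm : i ∈ pairSet σ
    · have hσm : σ i ∉ pairSet σ := pairSet_not_mem hinv i hm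
      rw [dif_neg hσm, dif_pos hm]
      congr 1
      exact Subtype.ext (hinv i)
    · have hσm : σ i ∈ pairSet σ := pairSet_mem_alt hinv hfp i hm
      rw [dif_pos hσm, dif_neg hm]
  · -- left inverse
    have hcond := (Finset.mem_filter.mp hs).2
    funext i
    by_cases hm : i ∈ pairSet σ
    · simp only [dif_pos hm]
    · simp only [dif_neg hm]
      exact hcond i
  · -- right inverse
    funext i
    rcases i with ⟨i, hi⟩
    simp only [dif_pos hi]
  · -- values agree
    have hcond := (Finset.mem_filter.mp hs).2
    rw [pairprod hinv hfp (fun i => h (s i) i)]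
    rw [Finset.univ_eq_attach, ← Finset.prod_attach (pairSet σ)
      (fun i => h (s i) i * h (s (σ i)) (σ i))]
    refine Finset.prod_congr rfl fun i _ => ?_
    simp only [hcond i.1]

end PairSet

lemma exists_pairing {ι A : Type*} [Fintype ι] [DecidableEq ι] [DecidableEq A]
    (s : ι → A) (U : Finset ι)
    (hU : ∀ a, Even ((U.filter fun i => s i = a).card)) :
    ∃ σ : Equiv.Perm ι, (∀ i, σ (σ i) = i) ∧ (∀ i ∈ U, σ i ≠ i)
      ∧ (∀ i ∉ U, σ i = i) ∧ (∀ i, s (σ i) = s i) := by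
  classical
  induction U using Finset.strongInduction with
  | _ U ih =>
    rcases U.eq_empty_or_nonempty with rfl | ⟨i₀, hi₀⟩
    · exact ⟨1, fun i => rfl, fun i hi => absurd hi (Finset.notMem_empty i),
        fun i _ => rfl, fun i => rfl⟩
    · have hfib : i₀ ∈ U.filter fun i => s i = s i₀ :=
        Finset.mem_filter.mpr ⟨hi₀, rfl⟩
      have hcard : 2 ≤ (U.filter fun i => s i = s i₀).card := by
        have he := hU (s i₀)
        have hpos : 0 < (U.filter fun i => s i = s i₀).card :=
          Finset.card_pos.mpr ⟨i₀, hfib⟩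
        rcases he with ⟨k, hk⟩
        omega
      obtain ⟨j, hj⟩ : ((U.filter fun i => s i = s i₀).erase i₀).Nonempty := by
        rw [← Finset.card_pos, Finset.card_erase_of_mem hfib]
        omega
      have hjne : j ≠ i₀ := Finset.ne_of_mem_erase hj
      have hjfib : j ∈ U.filter fun i => s i = s i₀ := Finset.mem_of_mem_erase hj
      have hjU : j ∈ U := (Finset.mem_filter.mp hjfib).1
      have hjs : s j = s i₀ := (Finset.mem_filter.mp hjfib).2
      set U' : Finset ι := (U.erase i₀).erase j with hU'
      have hss : U' ⊂ U := by
        apply Finset.ssubset_of_subset_of_ssubset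
          (Finset.erase_subset j (U.erase i₀))
        exact Finset.erase_ssubset hi₀
      have hU'mem : ∀ x, x ∈ U' ↔ (x ∈ U ∧ x ≠ i₀ ∧ x ≠ j) := by
        intro x
        rw [hU', Finset.mem_erase, Finset.mem_erase]
        tauto
      have hU'fib : ∀ a, Even ((U'.filter fun i => s i = a).card) := by
        intro a
        have hf : U'.filter (fun i => s i = a)
            = ((U.filter fun i => s i = a).erase i₀).erase j := by
          rw [hU', Finset.filter_erase, Finset.filter_erase]
        by_cases ha : s i₀ = a
        · have hi₀f : i₀ ∈ U.filter fun i => s i = a :=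
            Finset.mem_filter.mpr ⟨hi₀, ha⟩
          have hjf : j ∈ (U.filter fun i => s i = a).erase i₀ :=
            Finset.mem_erase.mpr ⟨hjne, Finset.mem_filter.mpr ⟨hjU, hjs.trans ha⟩⟩
          rw [hf, Finset.card_erase_of_mem hjf, Finset.card_erase_of_mem hi₀f]
          have := hU a
          have h2 : 2 ≤ (U.filter fun i => s i = a).card := by
            have : 0 < (U.filter fun i => s i = a).card := Finset.card_pos.mpr ⟨i₀, hi₀f⟩
            rcases hU a with ⟨k, hk⟩; omega
          rcases hU a with ⟨k, hk⟩
          refine ⟨k - 1, by omega⟩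
        · have hi₀f : i₀ ∉ U.filter fun i => s i = a := by
            intro hc; exact ha (Finset.mem_filter.mp hc).2
          have hjf : j ∉ U.filter fun i => s i = a := by
            intro hc; exact ha (hjs ▸ (Finset.mem_filter.mp hc).2)
          rw [hf, Finset.erase_eq_of_notMem hi₀f,
            Finset.erase_eq_of_notMem (fun hc => hjf hc)]
          exact hU a
      obtain ⟨σ', hinv', hfp', hfix', hs'⟩ := ih U' hss hU'fib
      have hfixi₀ : σ' i₀ = i₀ := hfix' i₀ (by rw [hU'mem]; tauto)
      have hfixj : σ' j = j := hfix' j (by rw [hU'mem]; tauto)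
      refine ⟨σ' * Equiv.swap i₀ j, ?_, ?_, ?_, ?_⟩
      · intro x
        simp only [Equiv.Perm.mul_apply]
        by_cases hx : x = i₀
        · subst hx
          rw [Equiv.swap_apply_left, hfixj, Equiv.swap_apply_right, hfixi₀]
        by_cases hx' : x = j
        · subst hx'
          rw [Equiv.swap_apply_right, hfixi₀, Equiv.swap_apply_left, hfixj]
        · rw [Equiv.swap_apply_of_ne_of_ne hx hx']
          have h1 : σ' x ≠ i₀ := fun hc => hx (by rw [← hinv' x, hc, hfixi₀])
          have h2 : σ' x ≠ j := fun hc => hx' (by rw [← hinv' x, hc, hfixj])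
          rw [Equiv.swap_apply_of_ne_of_ne h1 h2, hinv']
      · intro x hxU
        simp only [Equiv.Perm.mul_apply]
        by_cases hx : x = i₀
        · subst hx; rw [Equiv.swap_apply_left, hfixj]; exact fun hc => hjne hc
        by_cases hx' : x = j
        · subst hx'; rw [Equiv.swap_apply_right, hfixi₀]
          exact fun hc => hjne hc.symm
        · rw [Equiv.swap_apply_of_ne_of_ne hx hx']
          exact hfp' x ((hU'mem x).mpr ⟨hxU, hx, hx'⟩)
      · intro x hxU
        have hx : x ≠ i₀ := fun hc => hxU (hc ▸ hi₀)
        have hx' : x ≠ j := fun hc => hxU (hc ▸ hjU)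
        simp only [Equiv.Perm.mul_apply]
        rw [Equiv.swap_apply_of_ne_of_ne hx hx']
        exact hfix' x (fun hc => hxU ((hU'mem x).mp hc).1)
      · intro x
        simp only [Equiv.Perm.mul_apply]
        by_cases hx : x = i₀
        · subst hx; rw [Equiv.swap_apply_left, hfixj]; exact hjs
        by_cases hx' : x = j
        · subst hx'; rw [Equiv.swap_apply_right, hfixi₀]; exact hjs.symm
        · rw [Equiv.swap_apply_of_ne_of_ne hx hx']
          exact hs' x

def IsPairing {ι : Type*} [DecidableEq ι] (U : Finset ι) (σ : Equiv.Perm ι) : Prop :=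
  (∀ i, σ (σ i) = i) ∧ (∀ i ∈ U, σ i ≠ i ∧ σ i ∈ U) ∧ (∀ i ∉ U, σ i = i)

instance {ι : Type*} [Fintype ι] [DecidableEq ι] (U : Finset ι) :
    DecidablePred (IsPairing U) := fun σ => by
  unfold IsPairing; infer_instance

lemma count_pairings {ι : Type*} [Fintype ι] [DecidableEq ι] (U : Finset ι) :
    ((univ : Finset (Equiv.Perm ι)).filter (IsPairing U)).card
      ≤ U.card ^ (U.card / 2) := by
  classical
  induction U using Finset.strongInduction with
  | _ U ih =>
    rcases U.eq_empty_or_nonempty with rfl | ⟨a, ha⟩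
    · have hsub : ((univ : Finset (Equiv.Perm ι)).filter (IsPairing ∅)) ⊆ {1} := by
        intro σ hσ
        obtain ⟨-, -, hfix⟩ := (Finset.mem_filter.mp hσ).2
        simp only [Finset.mem_singleton]
        ext x
        exact hfix x (Finset.notMem_empty x)
      calc _ ≤ ({1} : Finset (Equiv.Perm ι)).card := Finset.card_le_card hsub
        _ = 1 := Finset.card_singleton 1
        _ ≤ _ := by simp
    · set k := U.card with hk
      have hk1 : 1 ≤ k := Finset.card_pos.mpr ⟨a, ha⟩
      have hstep : ((univ : Finset (Equiv.Perm ι)).filter (IsPairing U)).card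
          ≤ ((U.erase a).sigma fun b =>
              (univ : Finset (Equiv.Perm ι)).filter (IsPairing ((U.erase a).erase b))).card := by
        apply Finset.card_le_card_of_injOn
          (fun σ => ⟨σ a, σ * Equiv.swap a (σ a)⟩)
        · intro σ hσ
          obtain ⟨hinv, hmem, hfix⟩ := (Finset.mem_filter.mp hσ).2
          obtain ⟨hne, hmemU⟩ := hmem a ha
          have hba : σ (σ a) = a := hinv a
          refine Finset.mem_sigma.mpr ⟨Finset.mem_erase.mpr ⟨hne, hmemU⟩, ?_⟩
          refine Finset.mem_filter.mpr ⟨Finset.mem_univ _, ?_, ?_, ?_⟩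
          · intro x
            simp only [Equiv.Perm.mul_apply]
            by_cases hx : x = a
            · subst hx; simp only [Equiv.swap_apply_left, Equiv.swap_apply_right, hba]
            by_cases hx' : x = σ a
            · subst hx'; simp only [Equiv.swap_apply_left, Equiv.swap_apply_right, hba]
            · rw [Equiv.swap_apply_of_ne_of_ne hx hx']
              have h1 : σ x ≠ a := fun hc => hx' (by rw [← hinv x, hc])
              have h2 : σ x ≠ σ a := fun hc => hx (by rw [← hinv x, hc, hba])
              rw [Equiv.swap_apply_of_ne_of_ne h1 h2, hinv]
          · intro x hx
            rw [Finset.mem_erase, Finset.mem_erase] at hx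
            obtain ⟨hxb, hxa, hxU⟩ := hx
            simp only [Equiv.Perm.mul_apply]
            rw [Equiv.swap_apply_of_ne_of_ne hxa hxb]
            obtain ⟨hne', hmem'⟩ := hmem x hxU
            have h1 : σ x ≠ a := fun hc => hxb (by rw [← hinv x, hc])
            have h2 : σ x ≠ σ a := fun hc => hxa (by rw [← hinv x, hc, hba])
            exact ⟨hne', Finset.mem_erase.mpr ⟨h2, Finset.mem_erase.mpr ⟨h1, hmem'⟩⟩⟩
          · intro x hx
            simp only [Equiv.Perm.mul_apply]
            by_cases hxb : x = σ a
            · subst hxb; rw [Equiv.swap_apply_right]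
            by_cases hxa : x = a
            · subst hxa; rw [Equiv.swap_apply_left, hba]
            · have hxU : x ∉ U := by
                intro hc
                rw [Finset.mem_erase, Finset.mem_erase] at hx
                exact hx ⟨hxb, hxa, hc⟩
              rw [Equiv.swap_apply_of_ne_of_ne hxa hxb]
              exact hfix x hxU
        · intro σ₁ h₁ σ₂ h₂ heq
          simp only [Sigma.mk.inj_iff] at heq
          obtain ⟨hfst, hsnd⟩ := heq
          have hsnd' : σ₁ * Equiv.swap a (σ₁ a) = σ₂ * Equiv.swap a (σ₂ a) := by
            have := eq_of_heq hsnd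
            exact this
          rw [hfst] at hsnd'
          exact mul_right_cancel hsnd'
      rw [Finset.card_sigma] at hstep
      have hbound : ∀ b ∈ U.erase a,
          ((univ : Finset (Equiv.Perm ι)).filter (IsPairing ((U.erase a).erase b))).card
            ≤ (k - 2) ^ ((k - 2) / 2) := by
        intro b hb
        have hss : (U.erase a).erase b ⊂ U :=
          Finset.ssubset_of_subset_of_ssubset (Finset.erase_subset _ _)
            (Finset.erase_ssubset ha)
        have hcard : ((U.erase a).erase b).card = k - 2 := by
          rw [Finset.card_erase_of_mem hb, Finset.card_erase_of_mem ha, ← hk]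
          omega
        calc _ ≤ ((U.erase a).erase b).card ^ (((U.erase a).erase b).card / 2) := ih _ hss
          _ = (k - 2) ^ ((k - 2) / 2) := by rw [hcard]
      calc ((univ : Finset (Equiv.Perm ι)).filter (IsPairing U)).card
          ≤ ∑ b ∈ U.erase a, ((univ : Finset (Equiv.Perm ι)).filter
              (IsPairing ((U.erase a).erase b))).card := hstep
        _ ≤ ∑ _b ∈ U.erase a, (k - 2) ^ ((k - 2) / 2) := Finset.sum_le_sum hbound
        _ = (k - 1) * (k - 2) ^ ((k - 2) / 2) := by
            rw [Finset.sum_const, Finset.card_erase_of_mem ha, smul_eq_mul]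
        _ ≤ k ^ (k / 2) := by
            rcases Nat.lt_or_ge k 2 with hk2 | hk2
            · have : k = 1 := by omega
              simp [this]
            · have h1 : (k - 2 : ℕ) ^ ((k - 2) / 2) ≤ k ^ ((k - 2) / 2) :=
                Nat.pow_le_pow_left (by omega) _
              have h2 : (k - 1) * (k - 2) ^ ((k - 2) / 2) ≤ k * k ^ ((k - 2) / 2) :=
                Nat.mul_le_mul (by omega) h1
              calc (k - 1) * (k - 2) ^ ((k - 2) / 2) ≤ k * k ^ ((k - 2) / 2) := h2
                _ = k ^ ((k - 2) / 2 + 1) := by rw [pow_succ]; ring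
                _ = k ^ (k / 2) := by congr 1; omega

/-- A finite family `ℋ` of functions `A → B` is `r`-wise independent if, for `H`
drawn uniformly from `ℋ`, for every subset `T ⊆ A` with `|T| ≤ r`, the values
`(H x)_{x ∈ T}` are mutually independent and uniform on `B`, i.e. every assignment
on `T` occurs with probability `(1/|B|)^{|T|}`. -/
def RWiseIndependentFamily {A B : Type*} [DecidableEq A] [DecidableEq B] [Fintype B]
    (r : ℕ) (ℋ : Finset (A → B)) : Prop :=
  ∀ T : Finset A, T.card ≤ r → ∀ v : A → B,
    ((ℋ.filter (fun H => ∀ x ∈ T, H x = v x)).card : ℝ) / ℋ.card =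
      ((1 : ℝ) / Fintype.card B) ^ T.card

lemma aux_sign_sum {A : Type*} [DecidableEq A] [Fintype A] {ℓ' r m : ℕ}
    (ℱ : Finset (A → (Fin ℓ' → ZMod 2))) (hne : ℱ.Nonempty)
    (hind : RWiseIndependentFamily r ℱ) (u : Fin ℓ' → ZMod 2) (hu : u ≠ 0)
    (s : Fin m → A) (hmr : m ≤ r) :
    ∑ F ∈ ℱ, ∏ i, chi (∑ j, u j * F (s i) j)
      = if ∀ a, Even ((univ.filter fun i => s i = a).card) then (ℱ.card : ℝ) else 0 := by
  classical
  set mult : A → ℕ := fun a => ((univ : Finset (Fin m)).filter fun i => s i = a).card with hmult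
  have hprodcomp : ∀ F : A → (Fin ℓ' → ZMod 2),
      (∏ i, chi (∑ j, u j * F (s i) j))
        = ∏ a ∈ univ.image s, chi (∑ j, u j * F a j) ^ mult a := fun F =>
    Finset.prod_comp (fun a => chi (∑ j, u j * F a j)) s
  by_cases hall : ∀ a, Even (mult a)
  · rw [if_pos hall]
    have h1 : ∀ F ∈ ℱ, (∏ i, chi (∑ j, u j * F (s i) j)) = 1 := by
      intro F _
      rw [hprodcomp F]
      exact Finset.prod_eq_one fun a _ => chi_pow_even (hall a) _
    rw [Finset.sum_congr rfl h1]
    simp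
  · rw [if_neg hall]
    push_neg at hall
    obtain ⟨a₀, ha₀⟩ := hall
    set T : Finset A := univ.image s with hT
    have ha₀T : a₀ ∈ T := by
      by_contra hc
      apply ha₀
      have : mult a₀ = 0 := by
        rw [hmult]
        simp only [Finset.card_eq_zero]
        rw [Finset.filter_eq_empty_iff]
        intro i _ hieq
        exact hc (Finset.mem_image.mpr ⟨i, Finset.mem_univ i, hieq⟩)
      rw [this]; exact Even.zero
    have hTr : T.card ≤ r := le_trans (le_trans Finset.card_image_le (by simp)) hmr
    set φ : A → (Fin ℓ' → ZMod 2) → ℝ := fun a y => chi (∑ j, u j * y j) ^ mult a with hφ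
    -- step 1: per F expansion over pi
    have hstep1 : ∀ F ∈ ℱ, (∏ i, chi (∑ j, u j * F (s i) j))
        = ∑ v ∈ T.pi (fun _ => (univ : Finset (Fin ℓ' → ZMod 2))),
            (if ∀ a (h : a ∈ T), F a = v a h then ∏ x ∈ T.attach, φ x.1 (v x.1 x.2) else 0) := by
      intro F _
      rw [hprodcomp F]
      rw [Finset.sum_eq_single_of_mem (fun a _ => F a)]
      · rw [if_pos (fun a h => rfl)]
        rw [← Finset.prod_attach T (fun a => φ a (F a))]
      · exact Finset.mem_pi.mpr fun a h => Finset.mem_univ _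
      · intro v hv hvne
        rw [if_neg]
        intro hagree
        apply hvne
        funext a h
        exact (hagree a h).symm
    rw [Finset.sum_congr rfl hstep1, Finset.sum_comm]
    -- step 2: inner sum over F
    have hstep2 : ∀ v ∈ T.pi (fun _ => (univ : Finset (Fin ℓ' → ZMod 2))),
        (∑ F ∈ ℱ, if ∀ a (h : a ∈ T), F a = v a h then ∏ x ∈ T.attach, φ x.1 (v x.1 x.2) else 0)
          = ((ℱ.card : ℝ) * ((1:ℝ) / 2 ^ ℓ') ^ T.card) * ∏ x ∈ T.attach, φ x.1 (v x.1 x.2) := by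
      intro v hv
      rw [← Finset.sum_filter]
      rw [Finset.sum_const]
      set vtot : A → (Fin ℓ' → ZMod 2) := fun a => if h : a ∈ T then v a h else 0 with hvtot
      have hfe : ℱ.filter (fun F => ∀ a (h : a ∈ T), F a = v a h)
          = ℱ.filter (fun F => ∀ a ∈ T, F a = vtot a) := by
        apply Finset.filter_congr
        intro F _
        constructor
        · intro h a ha; rw [h a ha, hvtot]; simp [ha]
        · intro h a ha; rw [h a ha, hvtot]; simp [ha]
      have hcard := hind T hTr vtot
      have hFne' : (ℱ.card : ℝ) ≠ 0 := by
        exact_mod_cast Finset.card_ne_zero_of_mem hne.choose_spec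
      rw [div_eq_iff hFne'] at hcard
      have hBcard : (Fintype.card (Fin ℓ' → ZMod 2) : ℝ) = 2 ^ ℓ' := by
        simp [Fintype.card_fun]
      rw [hfe, nsmul_eq_mul]
      rw [Finset.filter_congr_decidable] at hcard ⊢
      rw [hcard, hBcard]
      ring
    rw [Finset.sum_congr rfl hstep2, ← Finset.mul_sum]
    have hstep3 : (∑ v ∈ T.pi (fun _ => (univ : Finset (Fin ℓ' → ZMod 2))),
        ∏ x ∈ T.attach, φ x.1 (v x.1 x.2)) = ∏ a ∈ T, ∑ y : Fin ℓ' → ZMod 2, φ a y :=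
      (Finset.prod_sum T (fun _ => (univ : Finset (Fin ℓ' → ZMod 2))) φ).symm
    rw [hstep3]
    have hzero : (∑ y : Fin ℓ' → ZMod 2, φ a₀ y) = 0 := by
      rw [hφ]
      simp only
      calc ∑ y : Fin ℓ' → ZMod 2, chi (∑ j, u j * y j) ^ mult a₀
          = ∑ y : Fin ℓ' → ZMod 2, chi (∑ j, u j * y j) :=
            Finset.sum_congr rfl fun y _ => chi_pow_odd ha₀ _
        _ = 0 := char_sum u hu
    rw [Finset.prod_eq_zero ha₀T hzero, mul_zero]

/-- The random variable `R = Σ_{s,t} (-1)^{⟨u₀,F(s)⟩ + ⟨u₁,G(t)⟩} p(s,t)`. -/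
noncomputable def biasR (ℓ ℓ' : ℕ)
    (p : (Fin ℓ → ZMod 2) → (Fin ℓ → ZMod 2) → ℝ)
    (u₀ u₁ : Fin ℓ' → ZMod 2)
    (F G : (Fin ℓ → ZMod 2) → (Fin ℓ' → ZMod 2)) : ℝ :=
  ∑ s, ∑ t,
    (-1 : ℝ) ^ (((∑ i, u₀ i * F s i) + (∑ i, u₁ i * G t i) : ZMod 2)).val * p s t

lemma T_bound {A B : Type} [Fintype A] [DecidableEq A] [Fintype B] [DecidableEq B]
    {m : ℕ} {σ τ : Equiv.Perm (Fin m)}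
    (hσ : ∀ i, σ (σ i) = i) (hσf : ∀ i, σ i ≠ i)
    (hτ : ∀ i, τ (τ i) = i) (hτf : ∀ i, τ i ≠ i)
    (p : A → B → ℝ) (η : ℝ) (hη0 : 0 ≤ η)
    (hp0 : ∀ a b, 0 ≤ p a b) (hpη : ∀ a b, p a b ≤ η)
    (hsum : ∑ a, ∑ b, p a b ≤ 1) :
    ∑ w : Fin m → A × B,
      (if ((∀ i, (w (σ i)).1 = (w i).1) ∧ (∀ i, (w (τ i)).2 = (w i).2)) then
        ∏ i, p (w i).1 (w i).2 else 0) ≤ η ^ (m / 2) := by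
  classical
  set g : B → ℝ := fun b => Real.sqrt (∑ a, p a b ^ 2) with hg
  have hg0 : ∀ b, 0 ≤ g b := fun b => Real.sqrt_nonneg _
  have hgsq : ∀ b, g b * g b = ∑ a, p a b ^ 2 := fun b =>
    Real.mul_self_sqrt (Finset.sum_nonneg fun a _ => sq_nonneg _)
  -- reindex over pairs of functions
  have hreindex : ∑ w : Fin m → A × B,
      (if ((∀ i, (w (σ i)).1 = (w i).1) ∧ (∀ i, (w (τ i)).2 = (w i).2)) then
        ∏ i, p (w i).1 (w i).2 else 0)
      = ∑ t : Fin m → B, ∑ s : Fin m → A,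
        (if ((∀ i, s (σ i) = s i) ∧ (∀ i, t (τ i) = t i)) then
          ∏ i, p (s i) (t i) else 0) := by
    rw [← Equiv.sum_comp (Equiv.arrowProdEquivProdArrow (Fin m) (fun _ => A) (fun _ => B)).symm
      (fun w : Fin m → A × B =>
        (if ((∀ i, (w (σ i)).1 = (w i).1) ∧ (∀ i, (w (τ i)).2 = (w i).2)) then
          ∏ i, p (w i).1 (w i).2 else 0))]
    rw [Fintype.sum_prod_type]
    rw [Finset.sum_comm]
    refine Finset.sum_congr rfl fun t _ => Finset.sum_congr rfl fun s _ => ?_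
    rfl
  rw [hreindex]
  -- inner sum over s via fact_sum, then Cauchy-Schwarz
  have hCS : ∀ b b' : B, (∑ a, p a b * p a b') ≤ g b * g b' := by
    intro b b'
    have h2 : (∑ a, p a b * p a b') ^ 2 ≤ (∑ a, p a b ^ 2) * (∑ a, p a b' ^ 2) :=
      Finset.sum_mul_sq_le_sq_mul_sq univ (fun a => p a b) (fun a => p a b')
    have hnn : 0 ≤ ∑ a, p a b * p a b' :=
      Finset.sum_nonneg fun a _ => mul_nonneg (hp0 a b) (hp0 a b')
    calc (∑ a, p a b * p a b') = Real.sqrt ((∑ a, p a b * p a b') ^ 2) :=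
          (Real.sqrt_sq hnn).symm
      _ ≤ Real.sqrt ((∑ a, p a b ^ 2) * (∑ a, p a b' ^ 2)) := Real.sqrt_le_sqrt h2
      _ = g b * g b' := by
          rw [Real.sqrt_mul (Finset.sum_nonneg fun a _ => sq_nonneg _)]
  have hinner : ∀ t : Fin m → B,
      (∑ s : Fin m → A, (if ((∀ i, s (σ i) = s i) ∧ (∀ i, t (τ i) = t i)) then
          ∏ i, p (s i) (t i) else 0))
        ≤ (if (∀ i, t (τ i) = t i) then ∏ i, g (t i) else 0) := by
    intro t
    by_cases ht : ∀ i, t (τ i) = t i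
    · rw [if_pos ht]
      have : ∀ s : Fin m → A,
          (if ((∀ i, s (σ i) = s i) ∧ (∀ i, t (τ i) = t i)) then
            ∏ i, p (s i) (t i) else 0)
          = (if (∀ i, s (σ i) = s i) then ∏ i, p (s i) (t i) else 0) := by
        intro s
        by_cases hs : ∀ i, s (σ i) = s i
        · rw [if_pos ⟨hs, ht⟩, if_pos hs]
        · rw [if_neg (fun hc => hs hc.1), if_neg hs]
      rw [Finset.sum_congr rfl fun s _ => this s]
      rw [fact_sum hσ hσf (fun a i => p a (t i))]
      calc ∏ i ∈ pairSet σ, (∑ a : A, p a (t i) * p a (t (σ i)))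
          ≤ ∏ i ∈ pairSet σ, (g (t i) * g (t (σ i))) := by
            apply Finset.prod_le_prod
            · intro i _
              exact Finset.sum_nonneg fun a _ => mul_nonneg (hp0 _ _) (hp0 _ _)
            · intro i _
              exact hCS (t i) (t (σ i))
        _ = ∏ i, g (t i) := (pairprod hσ hσf (fun i => g (t i))).symm
    · rw [if_neg ht]
      apply Finset.sum_nonpos
      intro s _
      rw [if_neg (fun hc : (∀ i, s (σ i) = s i) ∧ (∀ i, t (τ i) = t i) => ht hc.2)]
  calc ∑ t : Fin m → B, ∑ s : Fin m → A,
        (if ((∀ i, s (σ i) = s i) ∧ (∀ i, t (τ i) = t i)) then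
          ∏ i, p (s i) (t i) else 0)
      ≤ ∑ t : Fin m → B, (if (∀ i, t (τ i) = t i) then ∏ i, g (t i) else 0) :=
        Finset.sum_le_sum fun t _ => hinner t
    _ = ∏ i ∈ pairSet τ, (∑ b : B, g b * g b) := fact_sum hτ hτf (fun b _ => g b)
    _ = (∑ b : B, ∑ a : A, p a b ^ 2) ^ (pairSet τ).card := by
        rw [Finset.prod_const]
        congr 1
        exact Finset.sum_congr rfl fun b _ => hgsq b
    _ ≤ η ^ (pairSet τ).card := by
        apply pow_le_pow_left₀
        · exact Finset.sum_nonneg fun b _ => Finset.sum_nonneg fun a _ => sq_nonneg _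
        · calc ∑ b : B, ∑ a : A, p a b ^ 2
              ≤ ∑ b : B, ∑ a : A, η * p a b := by
                apply Finset.sum_le_sum; intro b _
                apply Finset.sum_le_sum; intro a _
                rw [sq]
                exact mul_le_mul_of_nonneg_right (hpη a b) (hp0 a b)
            _ = η * ∑ a : A, ∑ b : B, p a b := by
                simp only [← Finset.mul_sum]
                rw [Finset.sum_comm]
            _ ≤ η * 1 := mul_le_mul_of_nonneg_left hsum hη0
            _ = η := mul_one η
    _ = η ^ (m / 2) := by
        congr 1
        have := card_pairSet hτ hτf
        omega

/-- Tail bound for the bias `R = Σ_{s,t} (-1)^{⟨u₀,F(s)⟩+⟨u₁,G(t)⟩} p(s,t)` where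
`F, G` are drawn independently and uniformly from `r`-wise independent families,
`u₀, u₁` are nonzero, `0 ≤ p(s,t) ≤ η`, `Σ p(s,t) ≤ 1`, `4 ∣ r`, `r ≥ 4`:
for every `λ > 0`,
`P(|R| ≥ λ) ≤ 8 e^{1/(3r)} √(πr) (8 η r² / (e² λ²))^{r/4}`. -/
theorem bias_tail_bound
    (ℓ ℓ' : ℕ) (hℓ : 1 ≤ ℓ) (hℓ' : 1 ≤ ℓ')
    (r : ℕ) (hr : 4 ≤ r) (hr4 : 4 ∣ r)
    (η : ℝ) (hη0 : 0 < η) (hη1 : η ≤ 1)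
    (p : (Fin ℓ → ZMod 2) → (Fin ℓ → ZMod 2) → ℝ)
    (hp0 : ∀ s t, 0 ≤ p s t) (hpη : ∀ s t, p s t ≤ η)
    (hpsum : ∑ s, ∑ t, p s t ≤ 1)
    (ℱ 𝒢 : Finset ((Fin ℓ → ZMod 2) → (Fin ℓ' → ZMod 2)))
    (hFne : ℱ.Nonempty) (hGne : 𝒢.Nonempty)
    (hFind : RWiseIndependentFamily r ℱ) (hGind : RWiseIndependentFamily r 𝒢)
    (u₀ u₁ : Fin ℓ' → ZMod 2) (hu₀ : u₀ ≠ 0) (hu₁ : u₁ ≠ 0) :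
    ∀ lam : ℝ, 0 < lam →
      (((ℱ ×ˢ 𝒢).filter
          (fun FG => lam ≤ |biasR ℓ ℓ' p u₀ u₁ FG.1 FG.2|)).card : ℝ) /
        (ℱ ×ˢ 𝒢).card ≤
      8 * Real.exp (1 / (3 * r)) * Real.sqrt (Real.pi * r) *
        (8 * η * r ^ 2 / (Real.exp 1 ^ 2 * lam ^ 2)) ^ (r / 4) := by
  classical
  intro lam hlam
  obtain ⟨cdiv, hcdiv⟩ := hr4
  set q : ℕ := r / 4 with hq
  set m : ℕ := r / 2 with hm
  have hm2 : 2 * m = r := by omega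
  have hmq : m = 2 * q := by omega
  have hmr : m ≤ r := by omega
  have hmpos : 2 ≤ m := by omega
  have hmhalf : m / 2 = q := by omega
  -- step 1 : rewrite biasR
  have hbias : ∀ F G : (Fin ℓ → ZMod 2) → (Fin ℓ' → ZMod 2), biasR ℓ ℓ' p u₀ u₁ F G
      = ∑ x : (Fin ℓ → ZMod 2) × (Fin ℓ → ZMod 2), chi (∑ j, u₀ j * F x.1 j) * chi (∑ j, u₁ j * G x.2 j) * p x.1 x.2 := by
    intro F G
    rw [biasR, Fintype.sum_prod_type]
    refine Finset.sum_congr rfl fun s _ => Finset.sum_congr rfl fun t _ => ?_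
    have h1 : ((-1:ℝ) ^ (((∑ i, u₀ i * F s i) + (∑ i, u₁ i * G t i) : ZMod 2)).val)
        = chi ((∑ i, u₀ i * F s i) + (∑ i, u₁ i * G t i)) := rfl
    rw [h1, chi_add]
  -- step 2 : power expansion
  have hpow : ∀ F G : (Fin ℓ → ZMod 2) → (Fin ℓ' → ZMod 2), (biasR ℓ ℓ' p u₀ u₁ F G) ^ m
      = ∑ w : Fin m → (Fin ℓ → ZMod 2) × (Fin ℓ → ZMod 2), ∏ i,
          (chi (∑ j, u₀ j * F (w i).1 j) * chi (∑ j, u₁ j * G (w i).2 j)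
            * p (w i).1 (w i).2) := by
    intro F G
    rw [hbias F G]
    calc (∑ x : (Fin ℓ → ZMod 2) × (Fin ℓ → ZMod 2), chi (∑ j, u₀ j * F x.1 j) * chi (∑ j, u₁ j * G x.2 j) * p x.1 x.2) ^ m
        = ∏ _i : Fin m, (∑ x : (Fin ℓ → ZMod 2) × (Fin ℓ → ZMod 2),
            chi (∑ j, u₀ j * F x.1 j) * chi (∑ j, u₁ j * G x.2 j) * p x.1 x.2) := by
          rw [Finset.prod_const, Finset.card_univ, Fintype.card_fin]
      _ = ∑ w ∈ Fintype.piFinset (fun _ : Fin m => (univ : Finset ((Fin ℓ → ZMod 2) × (Fin ℓ → ZMod 2)))), ∏ i,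
            (chi (∑ j, u₀ j * F (w i).1 j) * chi (∑ j, u₁ j * G (w i).2 j)
              * p (w i).1 (w i).2) :=
          Finset.prod_univ_sum (fun _ => (univ : Finset ((Fin ℓ → ZMod 2) × (Fin ℓ → ZMod 2))))
            (fun _i x => chi (∑ j, u₀ j * F x.1 j) * chi (∑ j, u₁ j * G x.2 j) * p x.1 x.2)
      _ = _ := by rw [Fintype.piFinset_univ]
  -- the even-multiplicity predicates
  set P₁ : (Fin m → (Fin ℓ → ZMod 2) × (Fin ℓ → ZMod 2)) → Prop := fun w => ∀ a, Even ((univ.filter fun i => (w i).1 = a).card) with hP₁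
  set P₂ : (Fin m → (Fin ℓ → ZMod 2) × (Fin ℓ → ZMod 2)) → Prop := fun w => ∀ a, Even ((univ.filter fun i => (w i).2 = a).card) with hP₂
  set S : ℝ := ∑ w : Fin m → (Fin ℓ → ZMod 2) × (Fin ℓ → ZMod 2),
      (if P₁ w ∧ P₂ w then ∏ i, p (w i).1 (w i).2 else 0) with hS
  -- step 3 : expectation identity
  have hE : ∑ F ∈ ℱ, ∑ G ∈ 𝒢, (biasR ℓ ℓ' p u₀ u₁ F G) ^ m
      = (ℱ.card : ℝ) * 𝒢.card * S := by
    have e1 : ∑ F ∈ ℱ, ∑ G ∈ 𝒢, (biasR ℓ ℓ' p u₀ u₁ F G) ^ m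
        = ∑ w : Fin m → (Fin ℓ → ZMod 2) × (Fin ℓ → ZMod 2),
            ((∑ F ∈ ℱ, ∏ i, chi (∑ j, u₀ j * F (w i).1 j))
              * (∑ G ∈ 𝒢, ∏ i, chi (∑ j, u₁ j * G (w i).2 j))
              * ∏ i, p (w i).1 (w i).2) := by
      calc ∑ F ∈ ℱ, ∑ G ∈ 𝒢, (biasR ℓ ℓ' p u₀ u₁ F G) ^ m
          = ∑ F ∈ ℱ, ∑ G ∈ 𝒢, ∑ w : Fin m → (Fin ℓ → ZMod 2) × (Fin ℓ → ZMod 2), ∏ i,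
              (chi (∑ j, u₀ j * F (w i).1 j) * chi (∑ j, u₁ j * G (w i).2 j)
                * p (w i).1 (w i).2) :=
            Finset.sum_congr rfl fun F _ => Finset.sum_congr rfl fun G _ => hpow F G
        _ = ∑ F ∈ ℱ, ∑ w : Fin m → (Fin ℓ → ZMod 2) × (Fin ℓ → ZMod 2), ∑ G ∈ 𝒢, ∏ i,
              (chi (∑ j, u₀ j * F (w i).1 j) * chi (∑ j, u₁ j * G (w i).2 j)
                * p (w i).1 (w i).2) :=
            Finset.sum_congr rfl fun F _ => Finset.sum_comm
        _ = ∑ w : Fin m → (Fin ℓ → ZMod 2) × (Fin ℓ → ZMod 2), ∑ F ∈ ℱ, ∑ G ∈ 𝒢, ∏ i,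
              (chi (∑ j, u₀ j * F (w i).1 j) * chi (∑ j, u₁ j * G (w i).2 j)
                * p (w i).1 (w i).2) := Finset.sum_comm
        _ = _ := by
            refine Finset.sum_congr rfl fun w _ => ?_
            have hsplit : ∀ (F G : (Fin ℓ → ZMod 2) → (Fin ℓ' → ZMod 2)),
                (∏ i, (chi (∑ j, u₀ j * F (w i).1 j) * chi (∑ j, u₁ j * G (w i).2 j)
                  * p (w i).1 (w i).2))
                = (∏ i, chi (∑ j, u₀ j * F (w i).1 j))
                  * (∏ i, chi (∑ j, u₁ j * G (w i).2 j)) * ∏ i, p (w i).1 (w i).2 := by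
              intro F G
              rw [Finset.prod_mul_distrib, Finset.prod_mul_distrib]
            calc ∑ F ∈ ℱ, ∑ G ∈ 𝒢, ∏ i,
                  (chi (∑ j, u₀ j * F (w i).1 j) * chi (∑ j, u₁ j * G (w i).2 j)
                    * p (w i).1 (w i).2)
                = ∑ F ∈ ℱ, ∑ G ∈ 𝒢, ((∏ i, chi (∑ j, u₀ j * F (w i).1 j))
                    * (∏ i, chi (∑ j, u₁ j * G (w i).2 j)) * ∏ i, p (w i).1 (w i).2) :=
                  Finset.sum_congr rfl fun F _ => Finset.sum_congr rfl fun G _ => hsplit F G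
              _ = ∑ F ∈ ℱ, ((∏ i, chi (∑ j, u₀ j * F (w i).1 j))
                    * (∑ G ∈ 𝒢, ∏ i, chi (∑ j, u₁ j * G (w i).2 j))
                    * ∏ i, p (w i).1 (w i).2) := by
                  refine Finset.sum_congr rfl fun F _ => ?_
                  rw [← Finset.sum_mul, ← Finset.mul_sum]
              _ = _ := by
                  rw [← Finset.sum_mul, ← Finset.sum_mul]
    rw [e1]
    have e2 : ∀ w : Fin m → (Fin ℓ → ZMod 2) × (Fin ℓ → ZMod 2),
        ((∑ F ∈ ℱ, ∏ i, chi (∑ j, u₀ j * F (w i).1 j))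
          * (∑ G ∈ 𝒢, ∏ i, chi (∑ j, u₁ j * G (w i).2 j))
          * ∏ i, p (w i).1 (w i).2)
        = (ℱ.card : ℝ) * 𝒢.card *
            (if P₁ w ∧ P₂ w then ∏ i, p (w i).1 (w i).2 else 0) := by
      intro w
      have hF := aux_sign_sum ℱ hFne hFind u₀ hu₀ (fun i => (w i).1) hmr
      have hG := aux_sign_sum 𝒢 hGne hGind u₁ hu₁ (fun i => (w i).2) hmr
      rw [hF, hG]
      by_cases h1 : P₁ w
      · by_cases h2 : P₂ w
        · rw [if_pos h1, if_pos h2, if_pos ⟨h1, h2⟩]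
        · rw [if_pos h1, if_neg h2,
            if_neg (fun hc : P₁ w ∧ P₂ w => h2 hc.2)]
          ring
      · rw [if_neg h1, if_neg (fun hc : P₁ w ∧ P₂ w => h1 hc.1)]
        ring
    rw [Finset.sum_congr rfl fun w _ => e2 w]
    rw [← Finset.mul_sum]
  -- step 4 : the pairing bound on S
  set I : Finset (Equiv.Perm (Fin m)) :=
    (univ : Finset (Equiv.Perm (Fin m))).filter (IsPairing (univ : Finset (Fin m))) with hI
  have hT : ∀ w : Fin m → (Fin ℓ → ZMod 2) × (Fin ℓ → ZMod 2), (if P₁ w ∧ P₂ w then ∏ i, p (w i).1 (w i).2 else 0)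
      ≤ ∑ σ ∈ I, ∑ τ ∈ I,
        (if ((∀ i, (w (σ i)).1 = (w i).1) ∧ (∀ i, (w (τ i)).2 = (w i).2)) then
          ∏ i, p (w i).1 (w i).2 else 0) := by
    intro w
    have hnn : (0:ℝ) ≤ ∏ i, p (w i).1 (w i).2 :=
      Finset.prod_nonneg fun i _ => hp0 _ _
    by_cases hPP : P₁ w ∧ P₂ w
    · rw [if_pos hPP]
      obtain ⟨σ₀, hσinv, hσfp, _, hσcomp⟩ := exists_pairing (fun i => (w i).1) univ
        (fun a => hPP.1 a)
      obtain ⟨τ₀, hτinv, hτfp, _, hτcomp⟩ := exists_pairing (fun i => (w i).2) univ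
        (fun a => hPP.2 a)
      have hσI : σ₀ ∈ I := by
        rw [hI, Finset.mem_filter]
        exact ⟨Finset.mem_univ _, hσinv, fun i hi => ⟨hσfp i hi, Finset.mem_univ _⟩,
          fun i hi => absurd (Finset.mem_univ i) hi⟩
      have hτI : τ₀ ∈ I := by
        rw [hI, Finset.mem_filter]
        exact ⟨Finset.mem_univ _, hτinv, fun i hi => ⟨hτfp i hi, Finset.mem_univ _⟩,
          fun i hi => absurd (Finset.mem_univ i) hi⟩
      have hterm : (∏ i, p (w i).1 (w i).2)
          ≤ ∑ τ ∈ I, (if ((∀ i, (w (σ₀ i)).1 = (w i).1) ∧ (∀ i, (w (τ i)).2 = (w i).2)) then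
              ∏ i, p (w i).1 (w i).2 else 0) := by
        have h := Finset.single_le_sum (f := fun τ =>
            (if ((∀ i, (w (σ₀ i)).1 = (w i).1) ∧ (∀ i, (w (τ i)).2 = (w i).2)) then
              ∏ i, p (w i).1 (w i).2 else 0))
          (fun τ _ => by positivity) hτI
        simpa only [hσcomp, hτcomp, and_self, implies_true, if_true] using h
      refine le_trans hterm ?_
      exact Finset.single_le_sum (f := fun σ => ∑ τ ∈ I,
          (if ((∀ i, (w (σ i)).1 = (w i).1) ∧ (∀ i, (w (τ i)).2 = (w i).2)) then
            ∏ i, p (w i).1 (w i).2 else 0))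
        (fun σ _ => Finset.sum_nonneg fun τ _ => by positivity) hσI
    · rw [if_neg hPP]
      exact Finset.sum_nonneg fun σ _ => Finset.sum_nonneg fun τ _ => by positivity
  have hScard : S ≤ (I.card : ℝ) ^ 2 * η ^ q := by
    have h1 : S ≤ ∑ σ ∈ I, ∑ τ ∈ I, ∑ w : Fin m → (Fin ℓ → ZMod 2) × (Fin ℓ → ZMod 2),
        (if ((∀ i, (w (σ i)).1 = (w i).1) ∧ (∀ i, (w (τ i)).2 = (w i).2)) then
          ∏ i, p (w i).1 (w i).2 else 0) := by
      rw [hS]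
      calc ∑ w : Fin m → (Fin ℓ → ZMod 2) × (Fin ℓ → ZMod 2), (if P₁ w ∧ P₂ w then ∏ i, p (w i).1 (w i).2 else 0)
          ≤ ∑ w : Fin m → (Fin ℓ → ZMod 2) × (Fin ℓ → ZMod 2), ∑ σ ∈ I, ∑ τ ∈ I,
            (if ((∀ i, (w (σ i)).1 = (w i).1) ∧ (∀ i, (w (τ i)).2 = (w i).2)) then
              ∏ i, p (w i).1 (w i).2 else 0) := Finset.sum_le_sum fun w _ => hT w
        _ = _ := by
            rw [Finset.sum_comm]
            exact Finset.sum_congr rfl fun σ _ => Finset.sum_comm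
    have h2 : ∀ σ ∈ I, ∀ τ ∈ I, ∑ w : Fin m → (Fin ℓ → ZMod 2) × (Fin ℓ → ZMod 2),
        (if ((∀ i, (w (σ i)).1 = (w i).1) ∧ (∀ i, (w (τ i)).2 = (w i).2)) then
          ∏ i, p (w i).1 (w i).2 else 0) ≤ η ^ (m / 2) := by
      intro σ hσ τ hτ
      rw [hI, Finset.mem_filter] at hσ hτ
      obtain ⟨-, hσ1, hσ2, -⟩ := hσ
      obtain ⟨-, hτ1, hτ2, -⟩ := hτ
      exact T_bound hσ1 (fun i => (hσ2 i (Finset.mem_univ i)).1)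
        hτ1 (fun i => (hτ2 i (Finset.mem_univ i)).1) p η hη0.le hp0 hpη hpsum
    calc S ≤ ∑ σ ∈ I, ∑ τ ∈ I, ∑ w : Fin m → (Fin ℓ → ZMod 2) × (Fin ℓ → ZMod 2),
        (if ((∀ i, (w (σ i)).1 = (w i).1) ∧ (∀ i, (w (τ i)).2 = (w i).2)) then
          ∏ i, p (w i).1 (w i).2 else 0) := h1
      _ ≤ ∑ σ ∈ I, ∑ τ ∈ I, η ^ (m / 2) := by
          refine Finset.sum_le_sum fun σ hσ => Finset.sum_le_sum fun τ hτ => ?_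
          exact h2 σ hσ τ hτ
      _ = (I.card : ℝ) ^ 2 * η ^ q := by
          rw [Finset.sum_const, Finset.sum_const, hmhalf]
          simp [nsmul_eq_mul]
          ring
  -- step 5 : cardinality of I
  have hIcard : (I.card : ℝ) ≤ (m : ℝ) ^ q := by
    have := count_pairings (univ : Finset (Fin m))
    rw [Finset.card_univ, Fintype.card_fin] at this
    rw [hmhalf] at this
    calc (I.card : ℝ) ≤ ((m ^ q : ℕ) : ℝ) := by exact_mod_cast this
      _ = (m : ℝ) ^ q := by push_cast; ring
  -- step 6 : Markov
  set N : ℝ := (((ℱ ×ˢ 𝒢).filter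
      (fun FG => lam ≤ |biasR ℓ ℓ' p u₀ u₁ FG.1 FG.2|)).card : ℝ) with hN
  have hmev : Even m := ⟨q, by omega⟩
  have hmarkov : N * lam ^ m ≤ ∑ FG ∈ ℱ ×ˢ 𝒢, (biasR ℓ ℓ' p u₀ u₁ FG.1 FG.2) ^ m := by
    calc N * lam ^ m
        = ∑ _FG ∈ (ℱ ×ˢ 𝒢).filter (fun FG => lam ≤ |biasR ℓ ℓ' p u₀ u₁ FG.1 FG.2|),
            lam ^ m := by rw [Finset.sum_const, hN, nsmul_eq_mul]
      _ ≤ ∑ FG ∈ (ℱ ×ˢ 𝒢).filter (fun FG => lam ≤ |biasR ℓ ℓ' p u₀ u₁ FG.1 FG.2|),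
            (biasR ℓ ℓ' p u₀ u₁ FG.1 FG.2) ^ m := by
          refine Finset.sum_le_sum fun FG hFG => ?_
          have hFG' := (Finset.mem_filter.mp hFG).2
          calc lam ^ m ≤ |biasR ℓ ℓ' p u₀ u₁ FG.1 FG.2| ^ m :=
                pow_le_pow_left₀ hlam.le hFG' m
            _ = (biasR ℓ ℓ' p u₀ u₁ FG.1 FG.2) ^ m := hmev.pow_abs _
      _ ≤ ∑ FG ∈ ℱ ×ˢ 𝒢, (biasR ℓ ℓ' p u₀ u₁ FG.1 FG.2) ^ m := by
          refine Finset.sum_le_sum_of_subset_of_nonneg (Finset.filter_subset _ _) ?_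
          intro FG _ _
          exact hmev.pow_nonneg _
  have hprodsum : ∑ FG ∈ ℱ ×ˢ 𝒢, (biasR ℓ ℓ' p u₀ u₁ FG.1 FG.2) ^ m
      = (ℱ.card : ℝ) * 𝒢.card * S := by
    rw [Finset.sum_product]
    exact hE
  -- step 7 : put it together
  have hFc : (0:ℝ) < ℱ.card := by exact_mod_cast Finset.card_pos.mpr hFne
  have hGc : (0:ℝ) < 𝒢.card := by exact_mod_cast Finset.card_pos.mpr hGne
  have hprodcard : ((ℱ ×ˢ 𝒢).card : ℝ) = (ℱ.card : ℝ) * 𝒢.card := by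
    rw [Finset.card_product]; push_cast; ring
  have hlamm : (0:ℝ) < lam ^ m := pow_pos hlam m
  have hmain : N / ((ℱ ×ˢ 𝒢).card : ℝ) ≤ (m:ℝ) ^ m * η ^ q / lam ^ m := by
    rw [hprodcard, div_le_div_iff₀ (mul_pos hFc hGc) hlamm]
    calc N * lam ^ m ≤ (ℱ.card : ℝ) * 𝒢.card * S := hmarkov.trans hprodsum.le
      _ ≤ (ℱ.card : ℝ) * 𝒢.card * ((I.card : ℝ) ^ 2 * η ^ q) := by
          refine mul_le_mul_of_nonneg_left hScard (mul_pos hFc hGc).le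
      _ ≤ (ℱ.card : ℝ) * 𝒢.card * ((m:ℝ) ^ m * η ^ q) := by
          refine mul_le_mul_of_nonneg_left ?_ (mul_pos hFc hGc).le
          refine mul_le_mul_of_nonneg_right ?_ (pow_nonneg hη0.le q)
          calc (I.card : ℝ) ^ 2 ≤ ((m:ℝ) ^ q) ^ 2 := by
                refine pow_le_pow_left₀ (Nat.cast_nonneg _) hIcard 2
            _ = (m:ℝ) ^ m := by rw [← pow_mul]; congr 1; omega
      _ = (m:ℝ) ^ m * η ^ q * ((ℱ.card : ℝ) * 𝒢.card) := by ring
  refine le_trans hmain ?_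
  -- step 8 : numerics
  have he1 : (0:ℝ) < Real.exp 1 := Real.exp_pos 1
  have hrq : r / 4 = q := rfl
  have hrcast : (r : ℝ) = 2 * m := by exact_mod_cast hm2.symm
  have hkey : (8 * η * (r:ℝ) ^ 2 / (Real.exp 1 ^ 2 * lam ^ 2)) ^ q
      = 32 ^ q * η ^ q * (m:ℝ) ^ m / (Real.exp 1 ^ m * lam ^ m) := by
    have h8 : 8 * η * (r:ℝ) ^ 2 = 32 * η * (m:ℝ) ^ 2 := by rw [hrcast]; ring
    rw [h8, div_pow, mul_pow, mul_pow, mul_pow]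
    rw [← pow_mul (m:ℝ) 2 q, ← pow_mul (Real.exp 1) 2 q, ← pow_mul lam 2 q]
    have : 2 * q = m := by omega
    rw [this]
  rw [hkey]
  have hexp1 : (1:ℝ) ≤ Real.exp (1 / (3 * r)) := by
    rw [Real.one_le_exp_iff]
    positivity
  have hsqrt1 : (1:ℝ) ≤ Real.sqrt (Real.pi * r) := by
    rw [show (1:ℝ) = Real.sqrt 1 by rw [Real.sqrt_one]]
    apply Real.sqrt_le_sqrt
    have hpi : (3:ℝ) ≤ Real.pi := Real.pi_gt_three.le
    have hr4' : (4:ℝ) ≤ (r:ℝ) := by exact_mod_cast hr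
    nlinarith
  have hexp32 : Real.exp 1 ^ m ≤ 32 ^ q := by
    have hsq : (32:ℝ) ^ q = (Real.sqrt 32) ^ m := by
      rw [hmq, pow_mul, Real.sq_sqrt (by norm_num : (32:ℝ) ≥ 0)]
    rw [hsq]
    apply pow_le_pow_left₀ he1.le
    have h3 : Real.exp 1 ≤ 3 := by
      have := Real.exp_one_lt_d9
      linarith
    calc Real.exp 1 ≤ 3 := h3
      _ = Real.sqrt 9 := by rw [show (9:ℝ) = 3^2 by norm_num, Real.sqrt_sq]; norm_num
      _ ≤ Real.sqrt 32 := Real.sqrt_le_sqrt (by norm_num)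
  -- final comparison
  have hbase : (0:ℝ) ≤ (m:ℝ) ^ m * η ^ q / lam ^ m :=
    div_nonneg (mul_nonneg (pow_nonneg (Nat.cast_nonneg m) m)
      (pow_nonneg hη0.le q)) (pow_pos hlam m).le
  calc (m:ℝ) ^ m * η ^ q / lam ^ m
      = 1 * ((m:ℝ) ^ m * η ^ q / lam ^ m) := (one_mul _).symm
    _ ≤ (8 * Real.exp (1 / (3 * r)) * Real.sqrt (Real.pi * r) * (32 ^ q / Real.exp 1 ^ m))
          * ((m:ℝ) ^ m * η ^ q / lam ^ m) := by
        refine mul_le_mul_of_nonneg_right ?_ hbase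
        have h32e : (1:ℝ) ≤ 32 ^ q / Real.exp 1 ^ m := by
          rw [le_div_iff₀ (by positivity)]
          linarith [hexp32]
        calc (1:ℝ) = 1 * 1 * 1 * 1 := by ring
          _ ≤ 8 * Real.exp (1 / (3 * r)) * Real.sqrt (Real.pi * r)
              * (32 ^ q / Real.exp 1 ^ m) := by
            gcongr <;> norm_num [hexp1, hsqrt1, h32e]
    _ = 8 * Real.exp (1 / (3 * r)) * Real.sqrt (Real.pi * r) *
          (32 ^ q * η ^ q * (m:ℝ) ^ m / (Real.exp 1 ^ m * lam ^ m)) := by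
        field_simp
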